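/- There exists 0 < c₀ < 1/2 such that for every ε ∈ (0, c₀), every T > 10, and every h = (α 0; β γ) ∈ SL_d(ℝ) with α ∈ GL_m(ℝ), γ ∈ GL_n(ℝ), β ∈ M_{n×m}(ℝ), such that both h and h^{-1} satisfy the bounds max{‖α‖_{ν₁}^m, ‖γ‖_{ν₂}^n} < 1 + ε/2 and ‖β‖_{ν₁,ν₂} < ε / (4 n ψ(1)^{1/m}) (where for h^{-1} = (α' 0; β' γ') the bounds are imposed on its blocks α', β', γ'), one has E⁻_{T,ε} ⊆ h·E_T ⊆ E⁺_{T,ε}. -/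

import Mathlib

open MeasureTheory Set Filter

/-- The set `E_T` from the paper, as a subset of `ℝ^m × ℝ^n`. -/
def ESet (m n : ℕ) (ψ : ℝ → ℝ) (ν₁ : (Fin m → ℝ) → ℝ) (ν₂ : (Fin n → ℝ) → ℝ)
    (T : ℝ) : Set ((Fin m → ℝ) × (Fin n → ℝ)) :=
  {p | ν₁ p.1 ^ m < ψ (ν₂ p.2 ^ n) ∧ 1 ≤ ν₂ p.2 ^ n ∧ ν₂ p.2 ^ n < T}

/-- The set `E⁻_{T,ε}` from the paper. -/
def Eminus (m n : ℕ) (ψ : ℝ → ℝ) (ν₁ : (Fin m → ℝ) → ℝ) (ν₂ : (Fin n → ℝ) → ℝ)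
    (ε T : ℝ) : Set ((Fin m → ℝ) × (Fin n → ℝ)) :=
  {p | ν₁ p.1 ^ m < (1 + ε)⁻¹ * ψ ((1 + ε) * ν₂ p.2 ^ n)
    ∧ 3/2 ≤ ν₂ p.2 ^ n ∧ ν₂ p.2 ^ n < (1 + ε)⁻¹ * T}

/-- The set `E'_{T,ε}` from the paper. -/
def Eprime (m n : ℕ) (ψ : ℝ → ℝ) (ν₁ : (Fin m → ℝ) → ℝ) (ν₂ : (Fin n → ℝ) → ℝ)
    (ε T : ℝ) : Set ((Fin m → ℝ) × (Fin n → ℝ)) :=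
  {p | ν₁ p.1 ^ m < (1 + ε) * ψ ((1 + ε)⁻¹ * ν₂ p.2 ^ n)
    ∧ 3/2 ≤ ν₂ p.2 ^ n ∧ ν₂ p.2 ^ n < (1 + ε) * T}

/-- The set `C₀` from the paper. -/
def Czero (m n : ℕ) (ψ : ℝ → ℝ) (ν₁ : (Fin m → ℝ) → ℝ) (ν₂ : (Fin n → ℝ) → ℝ) :
    Set ((Fin m → ℝ) × (Fin n → ℝ)) :=
  {p | ν₁ p.1 ^ m < 2 * ψ 1 ∧ 1/2 < ν₂ p.2 ^ n ∧ ν₂ p.2 ^ n ≤ 3/2}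

/-- The set `E⁺_{T,ε} = E'_{T,ε} ∪ C₀` from the paper. -/
def Eplus (m n : ℕ) (ψ : ℝ → ℝ) (ν₁ : (Fin m → ℝ) → ℝ) (ν₂ : (Fin n → ℝ) → ℝ)
    (ε T : ℝ) : Set ((Fin m → ℝ) × (Fin n → ℝ)) :=
  Eprime m n ψ ν₁ ν₂ ε T ∪ Czero m n ψ ν₁ ν₂

/-- The operator norm of the linear map given by a matrix `M : ℝ^k → ℝ^l`, with respect to
a norm `νin` on the source and a norm `νout` on the target. -/
noncomputable def opNorm {k l : ℕ} (νin : (Fin k → ℝ) → ℝ) (νout : (Fin l → ℝ) → ℝ)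
    (M : Matrix (Fin l) (Fin k) ℝ) : ℝ :=
  sSup ((fun x => νout (M.mulVec x)) '' {x | νin x ≤ 1})

/-- The image of a subset of `ℝ^m × ℝ^n` under the linear map given by a matrix
indexed by `Fin m ⊕ Fin n`. -/
def matImage (m n : ℕ) (h : Matrix (Fin m ⊕ Fin n) (Fin m ⊕ Fin n) ℝ)
    (E : Set ((Fin m → ℝ) × (Fin n → ℝ))) : Set ((Fin m → ℝ) × (Fin n → ℝ)) :=
  (fun p => ((h.mulVec (Sum.elim p.1 p.2)) ∘ Sum.inl,
             (h.mulVec (Sum.elim p.1 p.2)) ∘ Sum.inr)) '' E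

section NormAux
variable {k : ℕ} (ν : (Fin k → ℝ) → ℝ)
  (hadd : ∀ x y, ν (x + y) ≤ ν x + ν y)
  (hsmul : ∀ (c : ℝ) x, ν (c • x) = |c| * ν x)
  (hdef : ∀ x, ν x = 0 ↔ x = 0)

include hsmul in
lemma nu_zero : ν 0 = 0 := by
  have := hsmul 0 0; simpa using this

include hsmul in
lemma nu_neg (x) : ν (-x) = ν x := by
  have := hsmul (-1) x; simpa using this

include hadd hsmul in
lemma nu_nonneg (x) : 0 ≤ ν x := by
  have h := hadd x (-x)
  rw [add_neg_cancel, nu_zero ν hsmul, nu_neg ν hsmul] at h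
  linarith

include hadd hsmul in
lemma nu_sum_le {ι : Type*} (s : Finset ι) (f : ι → (Fin k → ℝ)) :
    ν (∑ i ∈ s, f i) ≤ ∑ i ∈ s, ν (f i) := by
  classical
  induction s using Finset.induction_on with
  | empty => simp [nu_zero ν hsmul]
  | insert _ _ hni ih =>
    rename_i a s
    rw [Finset.sum_insert hni, Finset.sum_insert hni]
    exact le_trans (hadd _ _) (by linarith)

include hadd hsmul in
lemma nu_le_norm : ∃ C : ℝ, 0 ≤ C ∧ ∀ x, ν x ≤ C * ‖x‖ := by
  classical
  refine ⟨∑ j : Fin k, ν (fun i => if j = i then 1 else 0), Finset.sum_nonneg fun j _ => nu_nonneg ν hadd hsmul _, fun x => ?_⟩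
  have hx : x = ∑ j : Fin k, x j • fun i => if j = i then (1:ℝ) else 0 := pi_eq_sum_univ x
  calc ν x ≤ ∑ j : Fin k, ν (x j • fun i => if j = i then (1:ℝ) else 0) := by
        conv_lhs => rw [hx]
        exact nu_sum_le ν hadd hsmul _ _
    _ ≤ ∑ j : Fin k, ‖x‖ * ν (fun i => if j = i then (1:ℝ) else 0) := by
        refine Finset.sum_le_sum fun j _ => ?_
        rw [hsmul]
        exact mul_le_mul_of_nonneg_right (by simpa using norm_le_pi_norm x j)
          (nu_nonneg ν hadd hsmul _)
    _ = (∑ j : Fin k, ν (fun i => if j = i then (1:ℝ) else 0)) * ‖x‖ := by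
        rw [← Finset.mul_sum, mul_comm]

include hadd hsmul in
lemma nu_continuous : Continuous ν := by
  obtain ⟨C, hC0, hC⟩ := nu_le_norm ν hadd hsmul
  refine (LipschitzWith.of_dist_le_mul (K := C.toNNReal) (f := ν) fun x y => ?_).continuous
  have h1 : ν x ≤ ν y + C * ‖x - y‖ := by
    have := hadd (x - y) y; rw [sub_add_cancel] at this
    have := hC (x - y); linarith
  have h2 : ν y ≤ ν x + C * ‖x - y‖ := by
    have h := hadd (y - x) x; rw [sub_add_cancel] at h
    have h' : ν (y - x) ≤ C * ‖x - y‖ := by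
      rw [← neg_sub x y, nu_neg ν hsmul]; exact hC _
    linarith
  rw [Real.dist_eq, dist_eq_norm, Real.coe_toNNReal C hC0, abs_sub_le_iff]
  constructor <;> linarith

include hadd hsmul hdef in
lemma nu_lower (hk : 1 ≤ k) : ∃ c : ℝ, 0 < c ∧ ∀ x, c * ‖x‖ ≤ ν x := by
  haveI : Nonempty (Fin k) := ⟨⟨0, hk⟩⟩
  have hne : (Metric.sphere (0 : Fin k → ℝ) 1).Nonempty := NormedSpace.sphere_nonempty.2 zero_le_one
  obtain ⟨z, hz, hmin⟩ := (isCompact_sphere (0 : Fin k → ℝ) 1).exists_isMinOn hne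
    ((nu_continuous ν hadd hsmul).continuousOn)
  have hznorm : ‖z‖ = 1 := by simpa using mem_sphere_zero_iff_norm.1 hz
  have hz0 : z ≠ 0 := by intro h; rw [h, norm_zero] at hznorm; norm_num at hznorm
  have hc : 0 < ν z := lt_of_le_of_ne (nu_nonneg ν hadd hsmul z) fun h => hz0 ((hdef z).1 h.symm)
  refine ⟨ν z, hc, fun x => ?_⟩
  rcases eq_or_ne x 0 with rfl | hx
  · simp [nu_zero ν hsmul]
  · have hxn : 0 < ‖x‖ := norm_pos_iff.2 hx
    have hmem : ‖x‖⁻¹ • x ∈ Metric.sphere (0 : Fin k → ℝ) 1 := by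
      simp [norm_smul, abs_of_pos (inv_pos.2 hxn), inv_mul_cancel₀ hxn.ne']
    have h5 : ν z ≤ ν (‖x‖⁻¹ • x) := hmin hmem
    rw [hsmul, abs_of_pos (inv_pos.2 hxn)] at h5
    calc ν z * ‖x‖ ≤ (‖x‖⁻¹ * ν x) * ‖x‖ := mul_le_mul_of_nonneg_right h5 (norm_nonneg _)
      _ = ν x := by field_simp

end NormAux

section OpAux
variable {k l : ℕ} (νin : (Fin k → ℝ) → ℝ) (νout : (Fin l → ℝ) → ℝ)
  (hiadd : ∀ x y, νin (x + y) ≤ νin x + νin y)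
  (hismul : ∀ (c : ℝ) x, νin (c • x) = |c| * νin x)
  (hidef : ∀ x, νin x = 0 ↔ x = 0)
  (hoadd : ∀ x y, νout (x + y) ≤ νout x + νout y)
  (hosmul : ∀ (c : ℝ) x, νout (c • x) = |c| * νout x)
  (M : Matrix (Fin l) (Fin k) ℝ)

lemma mulVec_eq_sum'' (x : Fin k → ℝ) : M.mulVec x = ∑ j, x j • (fun i => M i j) := by
  funext i
  simp [Matrix.mulVec, dotProduct, Finset.sum_apply, mul_comm]

include hiadd hismul hidef hoadd hosmul in
lemma opNorm_bddAbove (hk : 1 ≤ k) :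
    BddAbove ((fun x => νout (M.mulVec x)) '' {x | νin x ≤ 1}) := by
  obtain ⟨c, hc, hcl⟩ := nu_lower νin hiadd hismul hidef hk
  refine ⟨c⁻¹ * ∑ j : Fin k, νout (fun i => M i j), ?_⟩
  rintro v ⟨x, hx, rfl⟩
  have hxn : ‖x‖ ≤ c⁻¹ := by
    have h1 : c * ‖x‖ ≤ 1 := (hcl x).trans hx
    exact (mul_le_mul_iff_right₀ hc).1 (by rwa [mul_inv_cancel₀ hc.ne'])
  calc νout (M.mulVec x) = νout (∑ j : Fin k, x j • (fun i => M i j)) := by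
        rw [mulVec_eq_sum'' M x]
    _ ≤ ∑ j : Fin k, νout (x j • (fun i => M i j)) := nu_sum_le νout hoadd hosmul _ _
    _ ≤ ∑ j : Fin k, c⁻¹ * νout (fun i => M i j) := by
        refine Finset.sum_le_sum fun j _ => ?_
        rw [hosmul]
        refine mul_le_mul_of_nonneg_right ?_ (nu_nonneg νout hoadd hosmul _)
        exact le_trans (by simpa using norm_le_pi_norm x j) hxn
    _ = c⁻¹ * ∑ j : Fin k, νout (fun i => M i j) := by rw [Finset.mul_sum]

include hiadd hismul hidef hoadd hosmul in
lemma opNorm_nonneg (hk : 1 ≤ k) : 0 ≤ opNorm νin νout M := by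
  have h0 : (0:ℝ) ∈ (fun x => νout (M.mulVec x)) '' {x | νin x ≤ 1} := by
    refine ⟨0, by simp [nu_zero νin hismul], ?_⟩
    simp [Matrix.mulVec_zero, nu_zero νout hosmul]
  exact le_csSup (opNorm_bddAbove νin νout hiadd hismul hidef hoadd hosmul M hk) h0

include hiadd hismul hidef hoadd hosmul in
lemma nu_mulVec_le (hk : 1 ≤ k) (x : Fin k → ℝ) :
    νout (M.mulVec x) ≤ opNorm νin νout M * νin x := by
  rcases eq_or_ne x 0 with rfl | hx
  · simp [Matrix.mulVec_zero, nu_zero νout hosmul, nu_zero νin hismul,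
      mul_nonneg (opNorm_nonneg νin νout hiadd hismul hidef hoadd hosmul M hk)]
  · have ht : 0 < νin x :=
      lt_of_le_of_ne (nu_nonneg νin hiadd hismul x) fun h => hx ((hidef x).1 h.symm)
    have hmem : ((νin x)⁻¹ • x) ∈ {x | νin x ≤ 1} := by
      simp only [Set.mem_setOf_eq, hismul, abs_of_pos (inv_pos.2 ht)]
      rw [inv_mul_cancel₀ ht.ne']
    have hle : νout (M.mulVec ((νin x)⁻¹ • x)) ≤ opNorm νin νout M :=
      le_csSup (opNorm_bddAbove νin νout hiadd hismul hidef hoadd hosmul M hk)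
        ⟨_, hmem, rfl⟩
    rw [Matrix.mulVec_smul, hosmul, abs_of_pos (inv_pos.2 ht)] at hle
    calc νout (M.mulVec x) = νin x * ((νin x)⁻¹ * νout (M.mulVec x)) := by field_simp
      _ ≤ νin x * opNorm νin νout M := mul_le_mul_of_nonneg_left hle ht.le
      _ = _ := mul_comm _ _

end OpAux

lemma pow_one_add_le' (n : ℕ) (t : ℝ) (ht : 0 ≤ t) (h : 4*(n:ℝ)*t ≤ 1) :
    (1+t)^n ≤ 1 + 4/3*(n:ℝ)*t := by
  induction n with
  | zero => simp
  | succ k ih =>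
    have hk : 4*(k:ℝ)*t ≤ 1 := by
      have : (k:ℝ) ≤ ((k+1:ℕ):ℝ) := by push_cast; linarith
      nlinarith
    have ih' := ih hk
    have h1 : (0:ℝ) ≤ 1 + t := by linarith
    calc (1+t)^(k+1) = (1+t)^k * (1+t) := pow_succ _ _
      _ ≤ (1 + 4/3*(k:ℝ)*t) * (1+t) := mul_le_mul_of_nonneg_right ih' h1
      _ ≤ 1 + 4/3*((k+1:ℕ):ℝ)*t := by push_cast at h ⊢; nlinarith

lemma root_bound' (n : ℕ) (hn : 1 ≤ n) (A ε : ℝ) (hA : 0 ≤ A) (hε : 0 ≤ ε)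
    (h : A^n < 1 + ε/2) : A ≤ 1 + ε/(2*n) := by
  have hn0 : (n:ℝ) ≠ 0 := by positivity
  have hB : 1 + ε/2 ≤ (1 + ε/(2*n))^n := by
    have h2 : (-2:ℝ) ≤ ε/(2*(n:ℝ)) := by
      have h3 : (0:ℝ) ≤ ε/(2*(n:ℝ)) := by positivity
      linarith
    have := one_add_mul_le_pow h2 n
    have heq : (n:ℝ) * (ε/(2*n)) = ε/2 := by field_simp
    linarith [this, heq.le, heq.ge]
  exact (lt_of_pow_lt_pow_left₀ n (by positivity) (h.trans_le hB)).le

lemma sandwich' (n : ℕ) (hn : 1 ≤ n) (ε b v : ℝ) (hε : 0 < ε) (hε3 : ε ≤ 1/3)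
    (hb : 1 ≤ b) (hv : 0 ≤ v)
    (hup : v ≤ b*(1+3*ε/(4*n))) (hlo : b*(1-3*ε/(4*n)) ≤ v) :
    v^n ≤ (1+ε)*b^n ∧ (1-3*ε/4)*b^n ≤ v^n := by
  have hn0 : (1:ℝ) ≤ n := by exact_mod_cast hn
  have ht0 : 0 ≤ 3*ε/(4*n) := by positivity
  have ht1 : 3*ε/(4*n) ≤ 1/4 := by
    rw [div_le_iff₀ (by positivity)]; nlinarith
  constructor
  · calc v^n ≤ (b*(1+3*ε/(4*n)))^n := pow_le_pow_left₀ hv hup n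
      _ = (1+3*ε/(4*n))^n * b^n := by rw [mul_pow, mul_comm]
      _ ≤ (1+ε) * b^n := by
          refine mul_le_mul_of_nonneg_right ?_ (by positivity)
          have h4 : 4*(n:ℝ)*(3*ε/(4*n)) ≤ 1 := by
            rw [show 4*(n:ℝ)*(3*ε/(4*n)) = 3*ε by field_simp]
            linarith
          have := pow_one_add_le' n (3*ε/(4*n)) ht0 h4
          calc (1+3*ε/(4*n))^n ≤ 1 + 4/3*(n:ℝ)*(3*ε/(4*n)) := this
            _ = 1 + ε := by field_simp
  · have hlo0 : 0 ≤ b*(1-3*ε/(4*n)) := by nlinarith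
    calc (1-3*ε/4)*b^n = (1 + (n:ℝ)*(-(3*ε/(4*n)))) * b^n := by
          rw [mul_neg]
          rw [show (n:ℝ)*(3*ε/(4*n)) = 3*ε/4 by field_simp]
          ring
      _ ≤ (1+(-(3*ε/(4*n))))^n * b^n :=
          mul_le_mul_of_nonneg_right (one_add_mul_le_pow (by nlinarith) n) (by positivity)
      _ = (b*(1-3*ε/(4*n)))^n := by rw [mul_pow]; ring_nf
      _ ≤ v^n := pow_le_pow_left₀ hlo0 hlo n


lemma ylin' (t b g s v : ℝ) (ht0 : 0 ≤ t) (ht4 : t ≤ 1/12) (hb : 1 ≤ b)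
    (hg0 : 0 ≤ g) (hs0 : 0 ≤ s) (hv0 : 0 ≤ v)
    (hub : g ≤ (1+2*t)*b) (hlb : b ≤ (1+2*t)*g)
    (hvs : v ≤ s+g) (hgv : g ≤ v+s) (hs : s ≤ t) :
    v ≤ b*(1+3*t) ∧ b*(1-3*t) ≤ v := by
  have htb : t*1 ≤ t*b := mul_le_mul_of_nonneg_left hb ht0
  constructor
  · nlinarith
  · have hkey : (1-2*t)*b ≤ g := by
      nlinarith [mul_nonneg (mul_nonneg ht0 ht0) hg0,
        mul_le_mul_of_nonneg_left hlb (by linarith : (0:ℝ) ≤ 1-2*t)]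
    nlinarith

set_option maxHeartbeats 2000000 in
theorem ET_stable_explicit_bounds (m n : ℕ) (hm : 1 ≤ m) (hn : 1 ≤ n)
    (ψ : ℝ → ℝ)
    (hψpos : ∀ t : ℝ, 1 ≤ t → 0 < ψ t)
    (hψcont : ContinuousOn ψ (Set.Ici 1))
    (hψanti : AntitoneOn ψ (Set.Ici 1))
    (ν₁ : (Fin m → ℝ) → ℝ)
    (hν₁add : ∀ x y, ν₁ (x + y) ≤ ν₁ x + ν₁ y)
    (hν₁smul : ∀ (c : ℝ) x, ν₁ (c • x) = |c| * ν₁ x)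
    (hν₁def : ∀ x, ν₁ x = 0 ↔ x = 0)
    (ν₂ : (Fin n → ℝ) → ℝ)
    (hν₂add : ∀ x y, ν₂ (x + y) ≤ ν₂ x + ν₂ y)
    (hν₂smul : ∀ (c : ℝ) x, ν₂ (c • x) = |c| * ν₂ x)
    (hν₂def : ∀ x, ν₂ x = 0 ↔ x = 0) :
    ∃ c₀ : ℝ, 0 < c₀ ∧ c₀ < 1/2 ∧
      ∀ ε : ℝ, 0 < ε → ε < c₀ → ∀ T : ℝ, 10 < T →
        ∀ (α : Matrix (Fin m) (Fin m) ℝ) (β : Matrix (Fin n) (Fin m) ℝ)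
          (γ : Matrix (Fin n) (Fin n) ℝ),
          IsUnit α.det → IsUnit γ.det →
          (Matrix.fromBlocks α 0 β γ).det = 1 →
          max (opNorm ν₁ ν₁ α ^ m) (opNorm ν₂ ν₂ γ ^ n) < 1 + ε / 2 →
          opNorm ν₁ ν₂ β < ε / (4 * n * ψ 1 ^ ((1 : ℝ) / m)) →
          max (opNorm ν₁ ν₁ α⁻¹ ^ m) (opNorm ν₂ ν₂ γ⁻¹ ^ n) < 1 + ε / 2 →
          opNorm ν₁ ν₂ (-(γ⁻¹ * β * α⁻¹)) < ε / (4 * n * ψ 1 ^ ((1 : ℝ) / m)) →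
          Eminus m n ψ ν₁ ν₂ ε T
              ⊆ matImage m n (Matrix.fromBlocks α 0 β γ) (ESet m n ψ ν₁ ν₂ T)
            ∧ matImage m n (Matrix.fromBlocks α 0 β γ) (ESet m n ψ ν₁ ν₂ T)
              ⊆ Eplus m n ψ ν₁ ν₂ ε T := by
  refine ⟨1/3, by norm_num, by norm_num, ?_⟩
  intro ε hε hεc T hT α β γ hαd hγd hdet hmax hβ hmax' hβ'
  have hε3 : ε ≤ 1/3 := hεc.le
  have hε1 : ε < 1 := by linarith
  have hψ1 : 0 < ψ 1 := hψpos 1 le_rfl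
  have hP : 0 < ψ 1 ^ ((1:ℝ)/m) := Real.rpow_pos_of_pos hψ1 _
  have hm0 : (m:ℝ) ≠ 0 := by positivity
  have hn0 : (0:ℝ) < n := by exact_mod_cast hn
  have hn1 : (1:ℝ) ≤ n := by exact_mod_cast hn
  have h1nn : ∀ z, 0 ≤ ν₁ z := nu_nonneg ν₁ hν₁add hν₁smul
  have h2nn : ∀ z, 0 ≤ ν₂ z := nu_nonneg ν₂ hν₂add hν₂smul
  have h1e : (0:ℝ) < 1 + ε := by linarith
  have hw0 : (0:ℝ) < (1+ε)⁻¹ := inv_pos.2 h1e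
  have hw1 : (1+ε)⁻¹ * (1+ε) = 1 := inv_mul_cancel₀ h1e.ne'
  have hw34 : (3:ℝ)/4 ≤ (1+ε)⁻¹ := by nlinarith [mul_nonneg hw0.le hε.le]
  -- a ≤ ψ1^{1/m} whenever a^m ≤ ψ1
  have haP : ∀ a : ℝ, 0 ≤ a → a^m ≤ ψ 1 → a ≤ ψ 1 ^ ((1:ℝ)/m) := by
    intro a ha h
    have h1 : ((a^m:ℝ)) ^ ((1:ℝ)/m) ≤ ψ 1 ^ ((1:ℝ)/m) :=
      Real.rpow_le_rpow (by positivity) h (by positivity)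
    rwa [← Real.rpow_natCast a m, ← Real.rpow_mul ha, mul_one_div,
      div_self hm0, Real.rpow_one] at h1
  -- max bounds split
  have hαm : opNorm ν₁ ν₁ α ^ m < 1+ε/2 := lt_of_le_of_lt (le_max_left _ _) hmax
  have hγn : opNorm ν₂ ν₂ γ ^ n < 1+ε/2 := lt_of_le_of_lt (le_max_right _ _) hmax
  have hαm' : opNorm ν₁ ν₁ α⁻¹ ^ m < 1+ε/2 := lt_of_le_of_lt (le_max_left _ _) hmax'
  have hγn' : opNorm ν₂ ν₂ γ⁻¹ ^ n < 1+ε/2 := lt_of_le_of_lt (le_max_right _ _) hmax'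
  have hγ0 : 0 ≤ opNorm ν₂ ν₂ γ :=
    opNorm_nonneg ν₂ ν₂ hν₂add hν₂smul hν₂def hν₂add hν₂smul γ hn
  have hγ0' : 0 ≤ opNorm ν₂ ν₂ γ⁻¹ :=
    opNorm_nonneg ν₂ ν₂ hν₂add hν₂smul hν₂def hν₂add hν₂smul γ⁻¹ hn
  have hγle : opNorm ν₂ ν₂ γ ≤ 1 + ε/(2*n) := root_bound' n hn _ ε hγ0 hε.le hγn
  have hγle' : opNorm ν₂ ν₂ γ⁻¹ ≤ 1 + ε/(2*n) := root_bound' n hn _ ε hγ0' hε.le hγn'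
  have hKP : ε / (4 * n * ψ 1 ^ ((1:ℝ)/m)) * (ψ 1 ^ ((1:ℝ)/m)) = ε/(4*n) := by
    field_simp
  -- β-type bound
  have hBgen : ∀ (B : Matrix (Fin n) (Fin m) ℝ) (x : Fin m → ℝ),
      opNorm ν₁ ν₂ B < ε / (4*n*ψ 1 ^ ((1:ℝ)/m)) → ν₁ x ≤ ψ 1 ^ ((1:ℝ)/m) →
      ν₂ (B.mulVec x) ≤ ε/(4*n) := by
    intro B x hB hx
    have h1 := nu_mulVec_le ν₁ ν₂ hν₁add hν₁smul hν₁def hν₂add hν₂smul B hm x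
    have h2 : opNorm ν₁ ν₂ B * ν₁ x ≤ (ε/(4*n*ψ 1 ^ ((1:ℝ)/m))) * (ψ 1 ^ ((1:ℝ)/m)) :=
      mul_le_mul hB.le hx (h1nn x) (by positivity)
    calc ν₂ (B.mulVec x) ≤ _ := h1
      _ ≤ _ := h2
      _ = ε/(4*n) := hKP
  -- α-type bound
  have hxpart : ∀ (A : Matrix (Fin m) (Fin m) ℝ) (x : Fin m → ℝ),
      opNorm ν₁ ν₁ A ^ m < 1+ε/2 → ν₁ (A.mulVec x) ^ m ≤ (1+ε/2) * ν₁ x ^ m := by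
    intro A x hA
    have h1 : ν₁ (A.mulVec x) ≤ opNorm ν₁ ν₁ A * ν₁ x :=
      nu_mulVec_le ν₁ ν₁ hν₁add hν₁smul hν₁def hν₁add hν₁smul A hm x
    calc ν₁ (A.mulVec x) ^ m ≤ (opNorm ν₁ ν₁ A * ν₁ x)^m := pow_le_pow_left₀ (h1nn _) h1 m
      _ = opNorm ν₁ ν₁ A ^ m * ν₁ x ^ m := mul_pow _ _ _
      _ ≤ (1+ε/2) * ν₁ x ^ m :=
          mul_le_mul_of_nonneg_right hA.le (pow_nonneg (h1nn x) m)
  -- the sandwich bound for the second coordinate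
  have hsand : ∀ (B : Matrix (Fin n) (Fin m) ℝ) (C Cinv : Matrix (Fin n) (Fin n) ℝ)
      (x : Fin m → ℝ) (y : Fin n → ℝ),
      ν₂ (B.mulVec x) ≤ ε/(4*n) →
      opNorm ν₂ ν₂ C ≤ 1 + ε/(2*n) →
      opNorm ν₂ ν₂ Cinv ≤ 1 + ε/(2*n) →
      Cinv.mulVec (C.mulVec y) = y →
      1 ≤ ν₂ y →
      ν₂ (B.mulVec x + C.mulVec y) ^ n ≤ (1+ε) * (ν₂ y)^n ∧
      (1 - 3*ε/4) * (ν₂ y)^n ≤ ν₂ (B.mulVec x + C.mulVec y) ^ n := by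
    intro B C Cinv x y hBx hC hCinv hCC hb
    have hg0 : 0 ≤ ν₂ (C.mulVec y) := h2nn _
    have hv0 : 0 ≤ ν₂ (B.mulVec x + C.mulVec y) := h2nn _
    have hub : ν₂ (C.mulVec y) ≤ (1 + ε/(2*n)) * ν₂ y :=
      le_trans (nu_mulVec_le ν₂ ν₂ hν₂add hν₂smul hν₂def hν₂add hν₂smul C hn y)
        (mul_le_mul_of_nonneg_right hC (h2nn y))
    have hlb : ν₂ y ≤ (1 + ε/(2*n)) * ν₂ (C.mulVec y) := by
      conv_lhs => rw [← hCC]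
      exact le_trans
        (nu_mulVec_le ν₂ ν₂ hν₂add hν₂smul hν₂def hν₂add hν₂smul Cinv hn (C.mulVec y))
        (mul_le_mul_of_nonneg_right hCinv hg0)
    have hvs : ν₂ (B.mulVec x + C.mulVec y) ≤ ν₂ (B.mulVec x) + ν₂ (C.mulVec y) :=
      hν₂add _ _
    have hgv : ν₂ (C.mulVec y) ≤ ν₂ (B.mulVec x + C.mulVec y) + ν₂ (B.mulVec x) := by
      have he : C.mulVec y = (B.mulVec x + C.mulVec y) + (-(B.mulVec x)) := by abel
      calc ν₂ (C.mulVec y) = ν₂ ((B.mulVec x + C.mulVec y) + (-(B.mulVec x))) := by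
            rw [← he]
        _ ≤ ν₂ (B.mulVec x + C.mulVec y) + ν₂ (-(B.mulVec x)) := hν₂add _ _
        _ = ν₂ (B.mulVec x + C.mulVec y) + ν₂ (B.mulVec x) := by
            rw [nu_neg ν₂ hν₂smul]
    have ht0 : 0 ≤ ε/(4*n) := by positivity
    have ht4 : ε/(4*n) ≤ 1/12 := by
      rw [div_le_iff₀ (by positivity)]; nlinarith
    have h2t : (1:ℝ) + ε/(2*n) = 1 + 2*(ε/(4*n)) := by ring
    rw [h2t] at hub hlb
    obtain ⟨hA, hB⟩ := ylin' (ε/(4*n)) (ν₂ y) (ν₂ (C.mulVec y)) (ν₂ (B.mulVec x))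
      (ν₂ (B.mulVec x + C.mulVec y)) ht0 ht4 hb hg0 (h2nn _) hv0 hub hlb hvs hgv hBx
    have hub' : ν₂ (B.mulVec x + C.mulVec y) ≤ ν₂ y * (1+3*ε/(4*n)) := by
      rw [show ν₂ y * (1+3*ε/(4*n)) = ν₂ y * (1+3*(ε/(4*n))) by ring]
      exact hA
    have hlb' : ν₂ y * (1-3*ε/(4*n)) ≤ ν₂ (B.mulVec x + C.mulVec y) := by
      rw [show ν₂ y * (1-3*ε/(4*n)) = ν₂ y * (1-3*(ε/(4*n))) by ring]
      exact hB
    exact sandwich' n hn ε (ν₂ y) (ν₂ (B.mulVec x + C.mulVec y)) hε hε3 hb hv0 hub' hlb'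
  constructor
  · -- E⁻ ⊆ h · E_T
    rintro ⟨x, y⟩ hp
    obtain ⟨hp1, hp2, hp3⟩ : ν₁ x ^ m < (1+ε)⁻¹ * ψ ((1+ε) * ν₂ y ^ n)
        ∧ 3/2 ≤ ν₂ y ^ n ∧ ν₂ y ^ n < (1+ε)⁻¹ * T := hp
    have hb1 : 1 ≤ ν₂ y := by
      by_contra hc
      push_neg at hc
      have := pow_lt_one₀ (h2nn y) hc (by omega : n ≠ 0)
      linarith
    have hbn1 : (1:ℝ) ≤ ν₂ y ^ n := by linarith
    have hZ1 : (1:ℝ) ≤ (1+ε) * ν₂ y ^ n := by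
      have := mul_le_mul (le_refl (1+ε)) hp2 (by norm_num) (by linarith : (0:ℝ) ≤ 1+ε)
      nlinarith
    have hψZ0 : 0 < ψ ((1+ε) * ν₂ y ^ n) := hψpos _ hZ1
    have hψZ1 : ψ ((1+ε) * ν₂ y ^ n) ≤ ψ 1 :=
      hψanti (Set.mem_Ici.mpr le_rfl) (Set.mem_Ici.mpr hZ1) hZ1
    have hwle1 : (1+ε)⁻¹ ≤ 1 := by nlinarith [mul_pos hw0 hε]
    have ham : ν₁ x ^ m ≤ ψ 1 := by
      nlinarith [mul_le_mul_of_nonneg_right hwle1 hψZ0.le]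
    have haPx : ν₁ x ≤ ψ 1 ^ ((1:ℝ)/m) := haP _ (h1nn x) ham
    have hBx : ν₂ ((-(γ⁻¹ * β * α⁻¹)).mulVec x) ≤ ε/(4*n) := hBgen _ x hβ' haPx
    have hCC : γ.mulVec (γ⁻¹.mulVec y) = y := by
      rw [Matrix.mulVec_mulVec, Matrix.mul_nonsing_inv γ hγd, Matrix.one_mulVec]
    obtain ⟨hvU, hvL⟩ := hsand (-(γ⁻¹ * β * α⁻¹)) γ⁻¹ γ x y hBx hγle' hγle hCC hb1
    set x' := α⁻¹.mulVec x with hx'def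
    set y' := (-(γ⁻¹ * β * α⁻¹)).mulVec x + γ⁻¹.mulVec y with hy'def
    have hv1 : (1:ℝ) ≤ ν₂ y' ^ n := by
      have h9 := mul_le_mul (by linarith : (3:ℝ)/4 ≤ 1 - 3*ε/4) hp2 (by norm_num)
        (by linarith : (0:ℝ) ≤ 1 - 3*ε/4)
      linarith
    have hvT : ν₂ y' ^ n < T := by
      calc ν₂ y' ^ n ≤ (1+ε) * ν₂ y ^ n := hvU
        _ < (1+ε) * ((1+ε)⁻¹ * T) := by
            exact mul_lt_mul_of_pos_left hp3 h1e
        _ = T := by rw [← mul_assoc, mul_comm (1+ε) (1+ε)⁻¹, hw1, one_mul]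
    have hx'ψ : ν₁ x' ^ m < ψ (ν₂ y' ^ n) := by
      have h1 : ν₁ x' ^ m ≤ (1+ε/2) * ν₁ x ^ m := hxpart α⁻¹ x hαm'
      have h2 : (1+ε/2) * ν₁ x ^ m < (1+ε/2) * ((1+ε)⁻¹ * ψ ((1+ε) * ν₂ y ^ n)) :=
        mul_lt_mul_of_pos_left hp1 (by linarith)
      have h3 : (1+ε/2) * ((1+ε)⁻¹ * ψ ((1+ε) * ν₂ y ^ n)) ≤ ψ ((1+ε) * ν₂ y ^ n) := by
        have hwψ : (1+ε) * ((1+ε)⁻¹ * ψ ((1+ε) * ν₂ y ^ n)) = ψ ((1+ε) * ν₂ y ^ n) := by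
          rw [← mul_assoc, mul_comm (1+ε) (1+ε)⁻¹, hw1, one_mul]
        nlinarith [mul_nonneg hw0.le hψZ0.le]
      have h4 : ψ ((1+ε) * ν₂ y ^ n) ≤ ψ (ν₂ y' ^ n) :=
        hψanti (Set.mem_Ici.mpr hv1) (Set.mem_Ici.mpr hZ1) hvU
      linarith
    simp only [matImage, Set.mem_image]
    refine ⟨(x', y'), ⟨hx'ψ, hv1, hvT⟩, ?_⟩
    simp only [Matrix.fromBlocks_mulVec, Sum.elim_comp_inl, Sum.elim_comp_inr,
      Matrix.zero_mulVec, add_zero]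
    have hxeq : α.mulVec x' = x := by
      rw [hx'def, Matrix.mulVec_mulVec, Matrix.mul_nonsing_inv α hαd, Matrix.one_mulVec]
    have hyeq : β.mulVec x' + γ.mulVec y' = y := by
      rw [hy'def, Matrix.mulVec_add, hx'def, Matrix.mulVec_mulVec, Matrix.mulVec_mulVec,
        Matrix.mulVec_mulVec]
      have hm1 : γ * -(γ⁻¹ * β * α⁻¹) = -(β * α⁻¹) := by
        rw [Matrix.mul_neg]
        congr 1
        rw [Matrix.mul_assoc γ⁻¹ β α⁻¹, ← Matrix.mul_assoc γ γ⁻¹ (β * α⁻¹),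
          Matrix.mul_nonsing_inv γ hγd, Matrix.one_mul]
      rw [hm1, Matrix.mul_nonsing_inv γ hγd, Matrix.neg_mulVec, Matrix.one_mulVec]
      abel
    rw [hxeq, hyeq]
  · -- h · E_T ⊆ E⁺
    rintro p hp
    simp only [matImage, Set.mem_image] at hp
    obtain ⟨q, hq, rfl⟩ := hp
    obtain ⟨hq1, hq2, hq3⟩ : ν₁ q.1 ^ m < ψ (ν₂ q.2 ^ n)
        ∧ 1 ≤ ν₂ q.2 ^ n ∧ ν₂ q.2 ^ n < T := hq
    simp only [Matrix.fromBlocks_mulVec, Sum.elim_comp_inl, Sum.elim_comp_inr,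
      Matrix.zero_mulVec, add_zero]
    have hb1 : 1 ≤ ν₂ q.2 := by
      by_contra hc
      push_neg at hc
      have := pow_lt_one₀ (h2nn q.2) hc (by omega : n ≠ 0)
      linarith
    have hψb0 : 0 < ψ (ν₂ q.2 ^ n) := hψpos _ hq2
    have hψb1 : ψ (ν₂ q.2 ^ n) ≤ ψ 1 :=
      hψanti (Set.mem_Ici.mpr le_rfl) (Set.mem_Ici.mpr hq2) hq2
    have haPx : ν₁ q.1 ≤ ψ 1 ^ ((1:ℝ)/m) :=
      haP _ (h1nn q.1) (by linarith)
    have hBx : ν₂ (β.mulVec q.1) ≤ ε/(4*n) := hBgen β q.1 hβ haPx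
    have hCC : γ⁻¹.mulVec (γ.mulVec q.2) = q.2 := by
      rw [Matrix.mulVec_mulVec, Matrix.nonsing_inv_mul γ hγd, Matrix.one_mulVec]
    obtain ⟨hvU, hvL⟩ := hsand β γ γ⁻¹ q.1 q.2 hBx hγle hγle' hCC hb1
    have hxm : ν₁ (α.mulVec q.1) ^ m ≤ (1+ε/2) * ν₁ q.1 ^ m := hxpart α q.1 hαm
    by_cases hcase : ν₂ (β.mulVec q.1 + γ.mulVec q.2) ^ n ≤ 3/2
    · refine Set.mem_union_right _ ⟨?_, ?_, hcase⟩
      · have h7 : (1+ε/2) * ψ (ν₂ q.2 ^ n) ≤ (1+ε/2) * ψ 1 :=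
          mul_le_mul_of_nonneg_left hψb1 (by linarith)
        have h8 := mul_pos (show (0:ℝ) < 1 - ε/2 by linarith) hψ1
        calc ν₁ (α.mulVec q.1) ^ m ≤ (1+ε/2) * ν₁ q.1 ^ m := hxm
          _ < (1+ε/2) * ψ (ν₂ q.2 ^ n) := mul_lt_mul_of_pos_left hq1 (by linarith)
          _ ≤ 2 * ψ 1 := by nlinarith
      · have h9 := mul_le_mul (by linarith : (3:ℝ)/4 ≤ 1 - 3*ε/4) hq2 (by norm_num)
          (by linarith : (0:ℝ) ≤ 1 - 3*ε/4)
        linarith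
    · push_neg at hcase
      refine Set.mem_union_left _ ⟨?_, hcase.le, ?_⟩
      · have h4 : ψ (ν₂ q.2 ^ n) ≤ ψ ((1+ε)⁻¹ * ν₂ (β.mulVec q.1 + γ.mulVec q.2) ^ n) := by
          refine hψanti (Set.mem_Ici.mpr ?_) (Set.mem_Ici.mpr hq2) ?_
          · have h9 := mul_le_mul hw34 hcase.le (by norm_num : (0:ℝ) ≤ 3/2) hw0.le
            linarith
          · have h5 : (1+ε)⁻¹ * (ν₂ (β.mulVec q.1 + γ.mulVec q.2) ^ n)
                ≤ (1+ε)⁻¹ * ((1+ε) * ν₂ q.2 ^ n) := mul_le_mul_of_nonneg_left hvU hw0.le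
            rwa [← mul_assoc, hw1, one_mul] at h5
        calc ν₁ (α.mulVec q.1) ^ m ≤ (1+ε/2) * ν₁ q.1 ^ m := hxm
          _ < (1+ε/2) * ψ (ν₂ q.2 ^ n) := mul_lt_mul_of_pos_left hq1 (by linarith)
          _ ≤ (1+ε) * ψ (ν₂ q.2 ^ n) :=
              mul_le_mul_of_nonneg_right (by linarith) hψb0.le
          _ ≤ (1+ε) * ψ ((1+ε)⁻¹ * ν₂ (β.mulVec q.1 + γ.mulVec q.2) ^ n) :=
              mul_le_mul_of_nonneg_left h4 (by linarith)
      · calc ν₂ (β.mulVec q.1 + γ.mulVec q.2) ^ n ≤ (1+ε) * ν₂ q.2 ^ n := hvU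
          _ < (1+ε) * T := mul_lt_mul_of_pos_left hq3 h1e
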